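/- Let I = [a,b] ⊆ [0,1] be a closed interval with a < b, and let S ⊆ [0,1] be such that λ(I \ S) = 0. Then there exist a set N ⊆ S ∩ I and a continuous non-decreasing function f : I → [0,1] such that f(a) = 0, f(b) = 1, λ(N) = 0, and λ(f(N)) = 1. -/

import Mathlib

open MeasureTheory Set

noncomputable def dig (n : ℕ) (y : ℝ) : Bool := decide ((2:ℝ)⁻¹ ≤ Int.fract (2 ^ n * y))

lemma floor_succ_dig (n : ℕ) (y : ℝ) :
    ⌊(2:ℝ) ^ (n + 1) * y⌋ = 2 * ⌊(2:ℝ) ^ n * y⌋ + (if dig n y then 1 else 0) := by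
  set z := (2:ℝ) ^ n * y with hz
  have hzz : ((⌊z⌋ : ℝ)) + Int.fract z = z := Int.floor_add_fract z
  have h2z : (2:ℝ) ^ (n + 1) * y = 2 * z := by rw [hz]; ring
  have h2 : (2:ℝ) ^ (n + 1) * y = 2 * Int.fract z + ((2 * ⌊z⌋ : ℤ) : ℝ) := by
    push_cast; linarith
  rw [h2, Int.floor_add_intCast]
  have hf0 := Int.fract_nonneg z
  have hf1 := Int.fract_lt_one z
  by_cases h : (2:ℝ)⁻¹ ≤ Int.fract z
  · have h1 : ⌊2 * Int.fract z⌋ = 1 := by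
      rw [Int.floor_eq_iff]
      constructor <;> push_cast <;> linarith
    have hdig : dig n y = true := by simp [dig, ← hz, h]
    rw [h1, hdig]
    simp
    ring
  · have h1 : ⌊2 * Int.fract z⌋ = 0 := by
      rw [Int.floor_eq_iff]
      push_neg at h
      constructor <;> push_cast <;> linarith
    have hdig : dig n y = false := by simp [dig, ← hz, h]
    rw [h1, hdig]
    simp

lemma floor_eq_of_dig_eq {y y' : ℝ} (hy : y ∈ Ico (0:ℝ) 1) (hy' : y' ∈ Ico (0:ℝ) 1)
    (n : ℕ) (h : ∀ k < n, dig k y = dig k y') : ⌊(2:ℝ) ^ n * y⌋ = ⌊(2:ℝ) ^ n * y'⌋ := by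
  induction n with
  | zero =>
    simp only [pow_zero, one_mul]
    rw [Int.floor_eq_zero_iff.2 hy, Int.floor_eq_zero_iff.2 hy']
  | succ n ih =>
    rw [floor_succ_dig, floor_succ_dig, ih (fun k hk => h k (hk.trans (Nat.lt_succ_self n))),
      h n (Nat.lt_succ_self n)]

lemma eq_of_dig_eq {y y' : ℝ} (hy : y ∈ Ico (0:ℝ) 1) (hy' : y' ∈ Ico (0:ℝ) 1)
    (h : ∀ k, dig k y = dig k y') : y = y' := by
  by_contra hne
  have habs : ∀ n : ℕ, |y - y'| < ((2:ℝ) ^ n)⁻¹ := by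
    intro n
    have hfl := floor_eq_of_dig_eq hy hy' n (fun k _ => h k)
    have h1 := Int.floor_le ((2:ℝ) ^ n * y)
    have h2 := Int.lt_floor_add_one ((2:ℝ) ^ n * y)
    have h3 := Int.floor_le ((2:ℝ) ^ n * y')
    have h4 := Int.lt_floor_add_one ((2:ℝ) ^ n * y')
    rw [hfl] at h1 h2
    have hpow : (0:ℝ) < 2 ^ n := by positivity
    rw [abs_sub_lt_iff]
    constructor
    · rw [← one_div, lt_div_iff₀ hpow]; linarith
    · rw [← one_div, lt_div_iff₀ hpow]; linarith
  have hpos : 0 < |y - y'| := abs_pos.2 (sub_ne_zero.2 hne)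
  obtain ⟨n, hn⟩ := pow_unbounded_of_one_lt (|y - y'|)⁻¹ (one_lt_two (α := ℝ))
  have h5 := habs n
  have h2n : (0:ℝ) < 2 ^ n := by positivity
  nlinarith [mul_inv_cancel₀ hpos.ne', mul_inv_cancel₀ h2n.ne']

lemma exists_firstDiff {y y' : ℝ} (hy : y ∈ Ico (0:ℝ) 1) (hy' : y' ∈ Ico (0:ℝ) 1)
    (hlt : y < y') :
    ∃ n, (∀ k < n, dig k y = dig k y') ∧ dig n y = false ∧ dig n y' = true := by
  have hne : ∃ n, dig n y ≠ dig n y' := by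
    by_contra hc
    push_neg at hc
    exact absurd (eq_of_dig_eq hy hy' hc) hlt.ne
  refine ⟨Nat.find hne, fun k hk => not_ne_iff.1 (Nat.find_min hne hk), ?_⟩
  have hd : dig (Nat.find hne) y ≠ dig (Nat.find hne) y' := Nat.find_spec hne
  set n := Nat.find hne
  have hfl : ⌊(2:ℝ) ^ n * y⌋ = ⌊(2:ℝ) ^ n * y'⌋ :=
    floor_eq_of_dig_eq hy hy' n (fun k hk => not_ne_iff.1 (Nat.find_min hne hk))
  have hmono : ⌊(2:ℝ) ^ (n + 1) * y⌋ ≤ ⌊(2:ℝ) ^ (n + 1) * y'⌋ :=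
    Int.floor_le_floor (mul_le_mul_of_nonneg_left hlt.le (by positivity))
  rw [floor_succ_dig, floor_succ_dig, hfl] at hmono
  cases hb : dig n y <;> cases hb' : dig n y'
  · rw [hb, hb'] at hd; exact absurd rfl hd
  · exact ⟨rfl, rfl⟩
  · exfalso; rw [hb, hb'] at hmono; simp at hmono
  · rw [hb, hb'] at hd; exact absurd rfl hd

lemma shrink_piece {K : Set ℝ} (hK : IsCompact K) (h0 : 0 < volume K) {ε : ℝ} (hε : 0 < ε) :
    ∃ K', K' ⊆ K ∧ IsCompact K' ∧ 0 < volume K' ∧ EMetric.diam K' ≤ ENNReal.ofReal ε := by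
  have hcov : K ⊆ ⋃ k : ℤ, Set.Icc (k * ε) ((k + 1) * ε) := by
    intro x _
    refine Set.mem_iUnion.2 ⟨⌊x / ε⌋, ?_, ?_⟩
    · rw [← le_div_iff₀ hε] ; exact Int.floor_le _
    · rw [← div_le_iff₀ hε] ; push_cast ; exact (Int.lt_floor_add_one _).le
  have hpos : ∃ k : ℤ, 0 < volume (K ∩ Set.Icc (k * ε) ((k + 1) * ε)) := by
    by_contra hc
    push_neg at hc
    simp only [le_zero_iff] at hc
    have : volume K = 0 := by
      have hsub : K ⊆ ⋃ k : ℤ, K ∩ Set.Icc (k * ε) ((k + 1) * ε) := by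
        intro x hx
        obtain ⟨u, ⟨k, rfl⟩, hu⟩ := hcov hx
        exact Set.mem_iUnion.2 ⟨k, hx, hu⟩
      exact le_zero_iff.1 ((measure_mono hsub).trans (le_of_eq (measure_iUnion_null hc)))
    exact absurd this h0.ne'
  obtain ⟨k, hk⟩ := hpos
  refine ⟨K ∩ Set.Icc (k * ε) ((k + 1) * ε), Set.inter_subset_left,
    hK.inter_right isClosed_Icc, hk, ?_⟩
  calc EMetric.diam (K ∩ Set.Icc (k * ε) ((k + 1) * ε))
      ≤ EMetric.diam (Set.Icc ((k:ℝ) * ε) ((k + 1) * ε)) :=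
        EMetric.diam_mono Set.inter_subset_right
    _ = ENNReal.ofReal ((k + 1) * ε - k * ε) := Real.ediam_Icc _ _
    _ = ENNReal.ofReal ε := by ring_nf

lemma two_sides {K : Set ℝ} (hK : IsCompact K) (h0 : 0 < volume K) (hfin : volume K ≠ ⊤) :
    ∃ c₀ c₁ : ℝ, c₀ < c₁ ∧ 0 < volume (K ∩ Set.Iic c₀) ∧ 0 < volume (K ∩ Set.Ici c₁) := by
  have hne : K.Nonempty := nonempty_of_measure_ne_zero h0.ne'
  set T := {c : ℝ | 0 < volume (K ∩ Set.Iic c)} with hT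
  have hTne : T.Nonempty := by
    refine ⟨sSup K, ?_⟩
    have : K ∩ Set.Iic (sSup K) = K := by
      apply Set.inter_eq_self_of_subset_left
      exact fun x hx => le_csSup hK.bddAbove hx
    simp only [hT, Set.mem_setOf_eq, this]
    exact h0
  have hTbdd : BddBelow T := by
    refine ⟨sInf K, fun c hc => ?_⟩
    by_contra hlt
    push_neg at hlt
    have : K ∩ Set.Iic c = ∅ := by
      ext x
      simp only [Set.mem_inter_iff, Set.mem_Iic, Set.mem_empty_iff_false, iff_false, not_and]
      intro hx hxc
      exact absurd (csInf_le hK.bddBelow hx) (by linarith)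
    rw [hT] at hc
    simp only [Set.mem_setOf_eq, this, measure_empty] at hc
    exact lt_irrefl _ hc
  set c' := sInf T with hc'
  have hIio : volume (K ∩ Set.Iio c') = 0 := by
    have hcup : K ∩ Set.Iio c' = ⋃ n : ℕ, K ∩ Set.Iic (c' - 1 / (n + 1)) := by
      ext x
      simp only [Set.mem_inter_iff, Set.mem_Iio, Set.mem_iUnion, Set.mem_Iic]
      constructor
      · rintro ⟨hx, hlt⟩
        obtain ⟨n, hn⟩ := exists_nat_one_div_lt (sub_pos.2 hlt)
        exact ⟨n, hx, by linarith⟩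
      · rintro ⟨n, hx, hle⟩
        have : (0:ℝ) < 1 / (n + 1) := by positivity
        exact ⟨hx, by linarith⟩
    rw [hcup]
    apply measure_iUnion_null
    intro n
    have hnotin : c' - 1 / (n + 1) ∉ T := by
      intro hmem
      have := csInf_le hTbdd hmem
      have hpos : (0:ℝ) < 1 / (n + 1) := by positivity
      rw [← hc'] at this
      linarith
    rw [hT] at hnotin
    simp only [Set.mem_setOf_eq, not_lt, le_zero_iff] at hnotin
    exact hnotin
  obtain ⟨ε, hε0, hεm⟩ : ∃ ε : ℝ, 0 < ε ∧ ENNReal.ofReal ε < volume K := by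
    have ht : 0 < (volume K).toReal := ENNReal.toReal_pos h0.ne' hfin
    refine ⟨(volume K).toReal / 2, by linarith, ?_⟩
    rw [ENNReal.ofReal_lt_iff_lt_toReal (by linarith) hfin]
    linarith
  set c₀ := c' + ε / 2 with hc₀
  have hc₀T : c₀ ∈ T := by
    obtain ⟨s, hs, hs'⟩ := (csInf_lt_iff hTbdd hTne).1 (show sInf T < c₀ by rw [← hc']; simp [hc₀]; positivity)
    rw [hT] at hs ⊢
    simp only [Set.mem_setOf_eq] at hs ⊢
    exact hs.trans_le (measure_mono (Set.inter_subset_inter_right _ (Set.Iic_subset_Iic.2 hs'.le)))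
  have hF : volume (K ∩ Set.Iic c₀) ≤ ENNReal.ofReal (ε / 2) := by
    have hsub : K ∩ Set.Iic c₀ ⊆ (K ∩ Set.Iio c') ∪ Set.Icc c' c₀ := by
      intro x ⟨hx, hxc⟩
      rcases lt_or_ge x c' with h | h
      · exact Or.inl ⟨hx, h⟩
      · exact Or.inr ⟨h, hxc⟩
    calc volume (K ∩ Set.Iic c₀) ≤ volume (K ∩ Set.Iio c') + volume (Set.Icc c' c₀) :=
          (measure_mono hsub).trans (measure_union_le _ _)
      _ = ENNReal.ofReal (ε / 2) := by rw [hIio, zero_add, Real.volume_Icc]; congr 1; rw [hc₀]; ring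
  have hright : 0 < volume (K ∩ Set.Ioi c₀) := by
    rcases eq_zero_or_pos (volume (K ∩ Set.Ioi c₀)) with h | h
    · exfalso
      have hcover : K ⊆ (K ∩ Set.Iic c₀) ∪ (K ∩ Set.Ioi c₀) := by
        intro x hx
        rcases le_or_gt x c₀ with hh | hh
        · exact Or.inl ⟨hx, hh⟩
        · exact Or.inr ⟨hx, hh⟩
      have : volume K ≤ ENNReal.ofReal (ε / 2) := by
        calc volume K ≤ volume (K ∩ Set.Iic c₀) + volume (K ∩ Set.Ioi c₀) :=
              (measure_mono hcover).trans (measure_union_le _ _)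
          _ ≤ ENNReal.ofReal (ε / 2) + 0 := by rw [h]; exact add_le_add_left hF _
          _ = ENNReal.ofReal (ε / 2) := add_zero _
      have h2 : ENNReal.ofReal (ε / 2) ≤ ENNReal.ofReal ε := ENNReal.ofReal_le_ofReal (by linarith)
      exact absurd ((this.trans h2).trans_lt hεm) (lt_irrefl _)
    · exact h
  have hcup2 : K ∩ Set.Ioi c₀ = ⋃ n : ℕ, K ∩ Set.Ici (c₀ + 1 / (n + 1)) := by
    ext x
    simp only [Set.mem_inter_iff, Set.mem_Ioi, Set.mem_iUnion, Set.mem_Ici]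
    constructor
    · rintro ⟨hx, hlt⟩
      obtain ⟨n, hn⟩ := exists_nat_one_div_lt (sub_pos.2 hlt)
      exact ⟨n, hx, by linarith⟩
    · rintro ⟨n, hx, hle⟩
      have hpos : (0:ℝ) < 1 / (n + 1) := by positivity
      exact ⟨hx, (lt_add_of_pos_right c₀ hpos).trans_le hle⟩
  have : ∃ n : ℕ, 0 < volume (K ∩ Set.Ici (c₀ + 1 / (n + 1))) := by
    by_contra hc
    push_neg at hc
    simp only [le_zero_iff] at hc
    rw [hcup2] at hright
    rw [measure_iUnion_null hc] at hright
    exact lt_irrefl _ hright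
  obtain ⟨n, hn⟩ := this
  exact ⟨c₀, c₀ + 1 / (n + 1), lt_add_of_pos_right c₀ (by positivity), hc₀T, hn⟩

def Good (K : Set ℝ) (ε : ℝ) (p : Set ℝ × Set ℝ) : Prop :=
  p.1 ⊆ K ∧ p.2 ⊆ K ∧ IsCompact p.1 ∧ IsCompact p.2 ∧ 0 < volume p.1 ∧ 0 < volume p.2 ∧
    EMetric.diam p.1 ≤ ENNReal.ofReal ε ∧ EMetric.diam p.2 ≤ ENNReal.ofReal ε ∧
    sSup p.1 < sInf p.2

lemma split_exists {K : Set ℝ} (hK : IsCompact K) (h0 : 0 < volume K) (hfin : volume K ≠ ⊤)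
    {ε : ℝ} (hε : 0 < ε) : ∃ p : Set ℝ × Set ℝ, Good K ε p := by
  obtain ⟨c₀, c₁, hc, hl, hr⟩ := two_sides hK h0 hfin
  obtain ⟨K₀, hK₀sub, hK₀c, hK₀v, hK₀d⟩ :=
    shrink_piece (hK.inter_right isClosed_Iic) hl hε
  obtain ⟨K₁, hK₁sub, hK₁c, hK₁v, hK₁d⟩ :=
    shrink_piece (hK.inter_right isClosed_Ici) hr hε
  have hK₀ne : K₀.Nonempty := nonempty_of_measure_ne_zero hK₀v.ne'
  have hK₁ne : K₁.Nonempty := nonempty_of_measure_ne_zero hK₁v.ne'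
  refine ⟨(K₀, K₁), hK₀sub.trans Set.inter_subset_left, hK₁sub.trans Set.inter_subset_left,
    hK₀c, hK₁c, hK₀v, hK₁v, hK₀d, hK₁d, ?_⟩
  have h1 : sSup K₀ ≤ c₀ := csSup_le hK₀ne (fun x hx => (hK₀sub hx).2)
  have h2 : c₁ ≤ sInf K₁ := le_csInf hK₁ne (fun x hx => (hK₁sub hx).2)
  linarith

open scoped Classical in
noncomputable def chP (K : Set ℝ) (ε : ℝ) : Set ℝ × Set ℝ :=
  if h : IsCompact K ∧ 0 < volume K ∧ volume K ≠ ⊤ ∧ 0 < ε then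
    (split_exists h.1 h.2.1 h.2.2.1 h.2.2.2).choose
  else (K, K)

lemma chP_good {K : Set ℝ} (hK : IsCompact K) (h0 : 0 < volume K) (hfin : volume K ≠ ⊤)
    {ε : ℝ} (hε : 0 < ε) : Good K ε (chP K ε) := by
  rw [chP, dif_pos ⟨hK, h0, hfin, hε⟩]
  exact (split_exists hK h0 hfin hε).choose_spec

noncomputable def sch (K : Set ℝ) (ω : ℕ → Bool) : ℕ → Set ℝ
  | 0 => K
  | n + 1 =>
      cond (ω n) (chP (sch K ω n) ((4:ℝ)⁻¹ ^ n)).2 (chP (sch K ω n) ((4:ℝ)⁻¹ ^ n)).1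

lemma sch_spec {K : Set ℝ} (hK : IsCompact K) (h0 : 0 < volume K) (hfin : volume K ≠ ⊤)
    (ω : ℕ → Bool) :
    ∀ n, IsCompact (sch K ω n) ∧ 0 < volume (sch K ω n) ∧ sch K ω n ⊆ K := by
  intro n
  induction n with
  | zero => exact ⟨hK, h0, subset_rfl⟩
  | succ n ih =>
    obtain ⟨hc, hv, hs⟩ := ih
    have hfin' : volume (sch K ω n) ≠ ⊤ := fun h => hfin (top_le_iff.1 (h ▸ measure_mono hs))
    have hg := chP_good hc hv hfin' (show (0:ℝ) < (4:ℝ)⁻¹ ^ n by positivity)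
    obtain ⟨h1, h2, h3, h4, h5, h6, _, _, _⟩ := hg
    rw [sch]
    cases hb : ω n
    · simp only [Bool.cond_false]
      exact ⟨h3, h5, h1.trans hs⟩
    · simp only [Bool.cond_true]
      exact ⟨h4, h6, h2.trans hs⟩

lemma sch_succ_subset {K : Set ℝ} (hK : IsCompact K) (h0 : 0 < volume K)
    (hfin : volume K ≠ ⊤) (ω : ℕ → Bool) (n : ℕ) : sch K ω (n + 1) ⊆ sch K ω n := by
  obtain ⟨hc, hv, hs⟩ := sch_spec hK h0 hfin ω n
  have hfin' : volume (sch K ω n) ≠ ⊤ := fun h => hfin (top_le_iff.1 (h ▸ measure_mono hs))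
  have hg := chP_good hc hv hfin' (show (0:ℝ) < (4:ℝ)⁻¹ ^ n by positivity)
  obtain ⟨h1, h2, _⟩ := hg
  rw [sch]
  cases hb : ω n
  · simpa only [Bool.cond_false] using h1
  · simpa only [Bool.cond_true] using h2

lemma sch_diam {K : Set ℝ} (hK : IsCompact K) (h0 : 0 < volume K) (hfin : volume K ≠ ⊤)
    (ω : ℕ → Bool) (n : ℕ) :
    EMetric.diam (sch K ω (n + 1)) ≤ ENNReal.ofReal ((4:ℝ)⁻¹ ^ n) := by
  obtain ⟨hc, hv, hs⟩ := sch_spec hK h0 hfin ω n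
  have hfin' : volume (sch K ω n) ≠ ⊤ := fun h => hfin (top_le_iff.1 (h ▸ measure_mono hs))
  have hg := chP_good hc hv hfin' (show (0:ℝ) < (4:ℝ)⁻¹ ^ n by positivity)
  obtain ⟨_, _, _, _, _, _, h7, h8, _⟩ := hg
  rw [sch]
  cases hb : ω n
  · simpa only [Bool.cond_false] using h7
  · simpa only [Bool.cond_true] using h8

lemma sch_agree {K : Set ℝ} (ω ω' : ℕ → Bool) :
    ∀ n, (∀ k < n, ω k = ω' k) → sch K ω n = sch K ω' n := by
  intro n
  induction n with
  | zero => intro _; rfl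
  | succ n ih =>
    intro h
    rw [sch, sch, ih (fun k hk => h k (hk.trans (Nat.lt_succ_self n))), h n (Nat.lt_succ_self n)]

lemma sch_order {K : Set ℝ} (hK : IsCompact K) (h0 : 0 < volume K) (hfin : volume K ≠ ⊤)
    (ω ω' : ℕ → Bool) (n : ℕ) (hagree : ∀ k < n, ω k = ω' k)
    (hω : ω n = false) (hω' : ω' n = true) :
    sSup (sch K ω (n + 1)) < sInf (sch K ω' (n + 1)) := by
  obtain ⟨hc, hv, hs⟩ := sch_spec hK h0 hfin ω n
  have hfin' : volume (sch K ω n) ≠ ⊤ := fun h => hfin (top_le_iff.1 (h ▸ measure_mono hs))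
  have hg := chP_good hc hv hfin' (show (0:ℝ) < (4:ℝ)⁻¹ ^ n by positivity)
  obtain ⟨_, _, _, _, _, _, _, _, h9⟩ := hg
  have heq : sch K ω' n = sch K ω n := (sch_agree ω ω' n (fun k hk => (hagree k hk))).symm
  rw [sch, sch, heq, hω, hω']
  simpa only [Bool.cond_false, Bool.cond_true] using h9

noncomputable def gpt (K : Set ℝ) (ω : ℕ → Bool) : ℝ := sInf (⋂ n, sch K ω n)

lemma gpt_mem {K : Set ℝ} (hK : IsCompact K) (h0 : 0 < volume K) (hfin : volume K ≠ ⊤)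
    (ω : ℕ → Bool) (n : ℕ) : gpt K ω ∈ sch K ω n := by
  have hcl : ∀ m, IsClosed (sch K ω m) := fun m => (sch_spec hK h0 hfin ω m).1.isClosed
  have hne : (⋂ m, sch K ω m).Nonempty :=
    IsCompact.nonempty_iInter_of_sequence_nonempty_isCompact_isClosed _
      (sch_succ_subset hK h0 hfin ω)
      (fun m => nonempty_of_measure_ne_zero (sch_spec hK h0 hfin ω m).2.1.ne')
      (sch_spec hK h0 hfin ω 0).1 hcl
  have hbdd : BddBelow (⋂ m, sch K ω m) :=
    ((sch_spec hK h0 hfin ω 0).1.bddBelow).mono (Set.iInter_subset _ 0)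
  have hmem : gpt K ω ∈ ⋂ m, sch K ω m :=
    IsClosed.csInf_mem (isClosed_iInter hcl) hne hbdd
  exact Set.mem_iInter.1 hmem n

lemma gpt_lt {K : Set ℝ} (hK : IsCompact K) (h0 : 0 < volume K) (hfin : volume K ≠ ⊤)
    (ω ω' : ℕ → Bool) (n : ℕ) (hagree : ∀ k < n, ω k = ω' k)
    (hω : ω n = false) (hω' : ω' n = true) : gpt K ω < gpt K ω' := by
  have h1 : gpt K ω ≤ sSup (sch K ω (n + 1)) :=
    le_csSup (sch_spec hK h0 hfin ω (n + 1)).1.bddAbove (gpt_mem hK h0 hfin ω (n + 1))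
  have h2 : sInf (sch K ω' (n + 1)) ≤ gpt K ω' :=
    csInf_le (sch_spec hK h0 hfin ω' (n + 1)).1.bddBelow (gpt_mem hK h0 hfin ω' (n + 1))
  have h3 := sch_order hK h0 hfin ω ω' n hagree hω hω'
  linarith

noncomputable def GG (K : Set ℝ) (y : ℝ) : ℝ := gpt K (fun n => dig n y)

lemma GG_mem {K : Set ℝ} (hK : IsCompact K) (h0 : 0 < volume K) (hfin : volume K ≠ ⊤)
    (y : ℝ) : GG K y ∈ K :=
  gpt_mem hK h0 hfin _ 0

lemma GG_strict {K : Set ℝ} (hK : IsCompact K) (h0 : 0 < volume K) (hfin : volume K ≠ ⊤)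
    {y y' : ℝ} (hy : y ∈ Ico (0:ℝ) 1) (hy' : y' ∈ Ico (0:ℝ) 1) (hlt : y < y') :
    GG K y < GG K y' := by
  obtain ⟨n, hagree, hfalse, htrue⟩ := exists_firstDiff hy hy' hlt
  exact gpt_lt hK h0 hfin _ _ n hagree hfalse htrue

lemma GG_mono {K : Set ℝ} (hK : IsCompact K) (h0 : 0 < volume K) (hfin : volume K ≠ ⊤)
    {y y' : ℝ} (hy : y ∈ Ico (0:ℝ) 1) (hy' : y' ∈ Ico (0:ℝ) 1) (hle : y ≤ y') :
    GG K y ≤ GG K y' := by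
  rcases eq_or_lt_of_le hle with rfl | h
  · exact le_rfl
  · exact (GG_strict hK h0 hfin hy hy' h).le

lemma GG_inj {K : Set ℝ} (hK : IsCompact K) (h0 : 0 < volume K) (hfin : volume K ≠ ⊤)
    {y y' : ℝ} (hy : y ∈ Ico (0:ℝ) 1) (hy' : y' ∈ Ico (0:ℝ) 1) (heq : GG K y = GG K y') :
    y = y' := by
  rcases lt_trichotomy y y' with h | h | h
  · exact absurd heq (GG_strict hK h0 hfin hy hy' h).ne
  · exact h
  · exact absurd heq.symm (GG_strict hK h0 hfin hy' hy h).ne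

theorem stmt_8 (a b : ℝ) (hab : a < b) (hI : Set.Icc a b ⊆ Set.Icc 0 1)
    (S : Set ℝ) (hS : S ⊆ Set.Icc 0 1) (hnull : volume (Set.Icc a b \ S) = 0) :
    ∃ N ⊆ S ∩ Set.Icc a b, ∃ f : ℝ → ℝ,
      ContinuousOn f (Set.Icc a b) ∧
      MonotoneOn f (Set.Icc a b) ∧
      Set.MapsTo f (Set.Icc a b) (Set.Icc 0 1) ∧
      f a = 0 ∧ f b = 1 ∧ volume N = 0 ∧ volume (f '' N) = 1 := by
  classical
  -- Step 1: a measurable positive-measure subset of `S ∩ [a,b]`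
  set Z := toMeasurable volume (Set.Icc a b \ S) with hZdef
  have hZ0 : volume Z = 0 := by rw [hZdef, measure_toMeasurable]; exact hnull
  set M := Set.Icc a b \ Z with hMdef
  have hMm : MeasurableSet M := measurableSet_Icc.diff (measurableSet_toMeasurable _ _)
  have hMS : M ⊆ S ∩ Set.Icc a b := by
    rintro x ⟨hx1, hx2⟩
    refine ⟨?_, hx1⟩
    by_contra h
    exact hx2 (subset_toMeasurable _ _ ⟨hx1, h⟩)
  have hMvol : 0 < volume M := by
    have h1 : volume (Set.Icc a b) ≤ volume M + volume Z := by
      refine (measure_mono ?_).trans (measure_union_le _ _)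
      intro x hx
      rcases em (x ∈ Z) with h | h
      · exact Or.inr h
      · exact Or.inl ⟨hx, h⟩
    rw [hZ0, add_zero, Real.volume_Icc] at h1
    exact lt_of_lt_of_le (by rw [ENNReal.ofReal_pos]; linarith) h1
  have hMfin : volume M ≠ ⊤ := by
    refine ne_top_of_le_ne_top ?_ (measure_mono (Set.diff_subset))
    rw [Real.volume_Icc]; exact ENNReal.ofReal_ne_top
  obtain ⟨K, hKM, hKc, hKlt⟩ := hMm.exists_isCompact_lt_add (μ := volume) hMfin hMvol.ne'
  have hKvol : 0 < volume K := by
    by_contra h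
    push_neg at h
    rw [le_zero_iff.1 h, zero_add] at hKlt
    exact lt_irrefl _ hKlt
  have hKfin : volume K ≠ ⊤ := ne_top_of_le_ne_top hMfin (measure_mono hKM)
  have hKS : K ⊆ S ∩ Set.Icc a b := hKM.trans hMS
  have hKI : K ⊆ Set.Icc a b := fun x hx => (hKS hx).2
  -- abbreviations
  set G := GG K with hGdef
  have hGmem : ∀ y, G y ∈ K := fun y => GG_mem hKc hKvol hKfin y
  have hGa : ∀ y, a ≤ G y := fun y => (hKI (hGmem y)).1
  have hGb : ∀ y, G y ≤ b := fun y => (hKI (hGmem y)).2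
  have hGstrict : ∀ y ∈ Set.Ico (0:ℝ) 1, ∀ y' ∈ Set.Ico (0:ℝ) 1, y < y' → G y < G y' :=
    fun y hy y' hy' h => GG_strict hKc hKvol hKfin hy hy' h
  have hGmono : ∀ y ∈ Set.Ico (0:ℝ) 1, ∀ y' ∈ Set.Ico (0:ℝ) 1, y ≤ y' → G y ≤ G y' :=
    fun y hy y' hy' h => GG_mono hKc hKvol hKfin hy hy' h
  have hGinj : ∀ y ∈ Set.Ico (0:ℝ) 1, ∀ y' ∈ Set.Ico (0:ℝ) 1, G y = G y' → y = y' :=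
    fun y hy y' hy' h => GG_inj hKc hKvol hKfin hy hy' h
  set N := G '' Set.Ico 0 1 with hNdef
  set E : ℝ → Set ℝ := fun x => {y ∈ Set.Ico (0:ℝ) 1 | G y ≤ x} with hEdef
  set f : ℝ → ℝ := fun x => (volume (E x)).toReal with hfdef
  have hEsub : ∀ x, E x ⊆ Set.Ico 0 1 := fun x => Set.sep_subset _ _
  have hEfin : ∀ x, volume (E x) ≤ 1 := by
    intro x
    calc volume (E x) ≤ volume (Set.Ico (0:ℝ) 1) := measure_mono (hEsub x)
      _ = 1 := by rw [Real.volume_Ico]; simp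
  have hEne : ∀ x, volume (E x) ≠ ⊤ := fun x => ne_top_of_le_ne_top ENNReal.one_ne_top (hEfin x)
  -- monotone
  have hmono : Monotone f := by
    intro x x' hxx'
    exact ENNReal.toReal_mono (hEne x')
      (measure_mono (fun y hy => ⟨hy.1, hy.2.trans hxx'⟩))
  -- key identity
  have hfG : ∀ y₀ ∈ Set.Ico (0:ℝ) 1, f (G y₀) = y₀ := by
    intro y₀ hy₀
    have hE : E (G y₀) = Set.Icc 0 y₀ := by
      ext y
      simp only [hEdef, Set.mem_setOf_eq, Set.mem_Icc, Set.mem_sep_iff, Set.mem_Ico]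
      constructor
      · rintro ⟨⟨h1, h2⟩, h3⟩
        refine ⟨h1, ?_⟩
        by_contra h
        push_neg at h
        exact absurd h3 (not_le.2 (hGstrict y₀ hy₀ y ⟨h1, h2⟩ h))
      · rintro ⟨h1, h2⟩
        have hy : y ∈ Set.Ico (0:ℝ) 1 := ⟨h1, lt_of_le_of_lt h2 hy₀.2⟩
        exact ⟨hy, hGmono y hy y₀ hy₀ h2⟩
    rw [hfdef]
    simp only [hE, Real.volume_Icc, sub_zero]
    exact ENNReal.toReal_ofReal hy₀.1
  -- continuity
  have hcont : Continuous f := by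
    rw [Metric.continuous_iff]
    intro x ε hε
    set V : ℕ → Set ℝ :=
      fun n => {y ∈ Set.Ico (0:ℝ) 1 | G y ∈ Set.Icc (x - 1/(n+1)) (x + 1/(n+1))} with hVdef
    have hVmeas : ∀ n, MeasurableSet (V n) := by
      intro n
      apply Set.OrdConnected.measurableSet
      constructor
      intro y₁ hy₁ y₂ hy₂ y hy
      have hyI : y ∈ Set.Ico (0:ℝ) 1 := ⟨hy₁.1.1.trans hy.1, lt_of_le_of_lt hy.2 hy₂.1.2⟩
      refine ⟨hyI, ⟨hy₁.2.1.trans (hGmono y₁ hy₁.1 y hyI hy.1), ?_⟩⟩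
      exact (hGmono y hyI y₂ hy₂.1 hy.2).trans hy₂.2.2
    have hVanti : Antitone V := by
      intro m n hmn y hy
      have hmn' : (m:ℝ) ≤ n := Nat.cast_le.2 hmn
      have h1 : (1:ℝ)/(n+1) ≤ 1/(m+1) :=
        one_div_le_one_div_of_le (by positivity) (by linarith)
      exact ⟨hy.1, ⟨by linarith [hy.2.1], by linarith [hy.2.2]⟩⟩
    have hVinter : volume (⋂ n, V n) = 0 := by
      apply Set.Subsingleton.measure_zero
      intro y hy y' hy'
      have hGy : ∀ z, z ∈ (⋂ n, V n) → G z = x := by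
        intro z hz
        have hb : ∀ n : ℕ, |G z - x| ≤ 1/(n+1) := by
          intro n
          have := Set.mem_iInter.1 hz n
          rw [abs_sub_le_iff]
          constructor <;> [linarith [this.2.2]; linarith [this.2.1]]
        by_contra hne
        have hpos : 0 < |G z - x| := abs_pos.2 (sub_ne_zero.2 hne)
        obtain ⟨n, hn⟩ := exists_nat_one_div_lt hpos
        exact absurd (hb n) (not_le.2 hn)
      have h1 := Set.mem_iInter.1 hy 0
      have h2 := Set.mem_iInter.1 hy' 0
      exact hGinj y h1.1 y' h2.1 ((hGy y hy).trans (hGy y' hy').symm)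
    have htend : Filter.Tendsto (fun n => volume (V n)) Filter.atTop (nhds 0) := by
      have := tendsto_measure_iInter_atTop (μ := volume)
        (fun n => (hVmeas n).nullMeasurableSet) hVanti
        ⟨0, ne_top_of_le_ne_top ENNReal.one_ne_top
          (by calc volume (V 0) ≤ volume (Set.Ico (0:ℝ) 1) := measure_mono (Set.sep_subset _ _)
                _ = 1 := by rw [Real.volume_Ico]; simp)⟩
      rw [hVinter] at this
      exact this
    obtain ⟨n, hn⟩ := (htend.eventually_lt_const (ENNReal.ofReal_pos.2 hε)).exists
    refine ⟨1/(n+1), by positivity, fun y hy => ?_⟩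
    rw [Real.dist_eq] at hy ⊢
    have hVfin : volume (V n) ≠ ⊤ :=
      ne_top_of_le_ne_top ENNReal.ofReal_ne_top hn.le
    have hVtoReal : (volume (V n)).toReal < ε := by
      rw [← ENNReal.toReal_ofReal hε.le]
      exact ENNReal.toReal_strict_mono ENNReal.ofReal_ne_top hn
    have key : ∀ u v : ℝ, u ≤ v → |v - x| < 1/(n+1) → |u - x| < 1/(n+1) →
        f v - f u ≤ (volume (V n)).toReal := by
      intro u v huv hv hu
      have hsub : E v ⊆ E u ∪ V n := by
        intro y' hy'
        rcases le_or_gt (G y') u with h | h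
        · exact Or.inl ⟨hy'.1, h⟩
        · refine Or.inr ⟨hy'.1, ⟨?_, ?_⟩⟩
          · rw [abs_sub_lt_iff] at hu; linarith
          · rw [abs_sub_lt_iff] at hv; linarith [hy'.2]
      have hmeas : volume (E v) ≤ volume (E u) + volume (V n) :=
        (measure_mono hsub).trans (measure_union_le _ _)
      have := ENNReal.toReal_mono
        (by exact ENNReal.add_ne_top.2 ⟨hEne u, hVfin⟩) hmeas
      rw [ENNReal.toReal_add (hEne u) hVfin] at this
      simp only [hfdef]
      linarith
    rcases le_total y x with h | h
    · have h1 : f y ≤ f x := hmono h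
      have h2 : f x - f y ≤ (volume (V n)).toReal :=
        key y x h (by rw [sub_self, abs_zero]; positivity) hy
      rw [abs_sub_lt_iff]
      constructor <;> linarith
    · have h1 : f x ≤ f y := hmono h
      have h2 : f y - f x ≤ (volume (V n)).toReal :=
        key x y h hy (by rw [sub_self, abs_zero]; positivity)
      rw [abs_sub_lt_iff]
      constructor <;> linarith
  -- null set
  have hNnull : volume N = 0 := by
    have hNsub : ∀ n : ℕ, N ⊆ ⋃ c : Fin (n+1) → Bool,
        sch K (fun k => if h : k < n + 1 then c ⟨k, h⟩ else false) (n + 1) := by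
      rintro n _ ⟨y, _, rfl⟩
      refine Set.mem_iUnion.2 ⟨fun i => dig i y, ?_⟩
      have heq : sch K (fun k => if h : k < n + 1 then dig k y else false) (n + 1)
          = sch K (fun k => dig k y) (n + 1) := by
        apply sch_agree
        intro k hk
        rw [dif_pos hk]
      rw [heq]
      exact gpt_mem hKc hKvol hKfin _ (n + 1)
    have hvol : ∀ n : ℕ, volume N ≤ 2^(n+1) * ENNReal.ofReal ((4:ℝ)⁻¹ ^ n) := by
      intro n
      calc volume N ≤ volume (⋃ c : Fin (n+1) → Bool,
            sch K (fun k => if h : k < n + 1 then c ⟨k, h⟩ else false) (n + 1)) :=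
          measure_mono (hNsub n)
        _ ≤ ∑ c : Fin (n+1) → Bool,
            volume (sch K (fun k => if h : k < n + 1 then c ⟨k, h⟩ else false) (n + 1)) :=
          measure_iUnion_fintype_le _ _
        _ ≤ ∑ _c : Fin (n+1) → Bool, ENNReal.ofReal ((4:ℝ)⁻¹ ^ n) := by
          apply Finset.sum_le_sum
          intro c _
          exact (Real.volume_le_diam _).trans (sch_diam hKc hKvol hKfin _ n)
        _ = 2^(n+1) * ENNReal.ofReal ((4:ℝ)⁻¹ ^ n) := by
          rw [Finset.sum_const, Finset.card_univ, Fintype.card_fun, Fintype.card_fin,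
            Fintype.card_bool, nsmul_eq_mul]
          push_cast
          ring
    have hconv : Filter.Tendsto (fun n : ℕ => (2:ENNReal)^(n+1) * ENNReal.ofReal ((4:ℝ)⁻¹ ^ n))
        Filter.atTop (nhds 0) := by
      have hrw : ∀ n : ℕ, (2:ENNReal)^(n+1) * ENNReal.ofReal ((4:ℝ)⁻¹ ^ n)
          = 2 * ((2:ENNReal)⁻¹)^n := by
        intro n
        rw [ENNReal.ofReal_pow (by norm_num)]
        have h4 : ENNReal.ofReal ((4:ℝ)⁻¹) = (4:ENNReal)⁻¹ := by
          rw [ENNReal.ofReal_inv_of_pos (by norm_num)]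
          norm_num
        rw [h4, pow_succ]
        rw [mul_comm ((2:ENNReal)^n) 2, mul_assoc, ← mul_pow]
        congr 1
        congr 1
        rw [show (4:ENNReal) = 2 * 2 by norm_num, ENNReal.mul_inv (by norm_num) (by norm_num),
          ← mul_assoc, ENNReal.mul_inv_cancel (by norm_num) (by norm_num), one_mul]
      simp only [hrw]
      have h2 : Filter.Tendsto (fun n : ℕ => ((2:ENNReal)⁻¹)^n) Filter.atTop (nhds 0) :=
        ENNReal.tendsto_pow_atTop_nhds_zero_of_lt_one (by
          rw [ENNReal.inv_lt_one]; norm_num)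
      have := ENNReal.Tendsto.const_mul h2 (Or.inr (ENNReal.ofNat_ne_top (n := 2)))
      simpa using this
    exact le_zero_iff.1 (ge_of_tendsto' hconv hvol)
  -- conclusion
  refine ⟨N, ?_, f, hcont.continuousOn, hmono.monotoneOn _, ?_, ?_, ?_, hNnull, ?_⟩
  · rintro _ ⟨y, _, rfl⟩
    exact hKS (hGmem y)
  · -- maps to [0,1]
    intro x _
    refine ⟨ENNReal.toReal_nonneg, ?_⟩
    calc f x ≤ (1:ENNReal).toReal := ENNReal.toReal_mono ENNReal.one_ne_top (hEfin x)
      _ = 1 := ENNReal.toReal_one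
  · -- f a = 0
    have hEa : (E a).Subsingleton := by
      intro y hy y' hy'
      have h1 : G y = a := le_antisymm hy.2 (hGa y)
      have h2 : G y' = a := le_antisymm hy'.2 (hGa y')
      exact hGinj y hy.1 y' hy'.1 (h1.trans h2.symm)
    simp only [hfdef]
    rw [hEa.measure_zero volume, ENNReal.toReal_zero]
  · -- f b = 1
    have hEb : E b = Set.Ico 0 1 := by
      ext y
      simp only [hEdef, Set.mem_sep_iff, and_iff_left_iff_imp]
      intro _
      exact hGb y
    simp only [hfdef]
    rw [hEb, Real.volume_Ico]
    norm_num
  · -- volume (f '' N) = 1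
    have himg : f '' N = Set.Ico 0 1 := by
      rw [hNdef, Set.image_image]
      rw [Set.image_congr hfG, Set.image_id']
    rw [himg, Real.volume_Ico]
    norm_num
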